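/- In the CL-preferential model M' constructed from a loop-cumulative model M by taking W' = {(s,w) : w ∈ l(s)}, R relating pairs with the same state, <' induced by <, and V'(s,w)=V(w): for every propositional formula A, M, s ⊫ A if and only if M', (s,w) ⊨ LA, for every w ∈ l(s). -/

import Mathlib

/-- Propositional formulas over atoms `α`. -/
inductive PForm (α : Type) : Type
  | atom : α → PForm α
  | neg : PForm α → PForm α
  | conj : PForm α → PForm α → PForm α
  | disj : PForm α → PForm α → PForm α

/-- Truth of a propositional formula at a world, given a valuation. -/
def PForm.sat {α W : Type} (V : W → α → Prop) : W → PForm α → Prop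
  | w, .atom a => V w a
  | w, .neg A => ¬ PForm.sat V w A
  | w, .conj A B => PForm.sat V w A ∧ PForm.sat V w B
  | w, .disj A B => PForm.sat V w A ∨ PForm.sat V w B

/-- `minW lt S w` : `w` is a `lt`-minimal world satisfying `S`. -/
def minW {W : Type} (lt : W → W → Prop) (S : W → Prop) (w : W) : Prop :=
  S w ∧ ∀ w', lt w' w → ¬ S w'

/-- Truth of a propositional formula at a state: true in all its worlds. -/
def stateSat {α S W : Type} (l : S → Set W) (V : W → α → Prop)
    (s : S) (A : PForm α) : Prop :=
  ∀ w ∈ l s, PForm.sat V w A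

/-- A loop-cumulative model. -/
structure LCModel (α : Type) where
  S : Type
  W : Type
  l : S → Set W
  lt : S → S → Prop
  V : W → α → Prop
  l_ne : ∀ s, (l s).Nonempty
  irrefl : Irreflexive lt
  trans : Transitive lt
  smooth : ∀ (A : PForm α) (s : S), stateSat l V s A →
      minW lt (fun s' => stateSat l V s' A) s ∨
        ∃ s', minW lt (fun s'' => stateSat l V s'' A) s' ∧ lt s' s

/-- `LA` holds at `w`: `A` holds at all `R`-successors of `w`. -/
def Lsat {α W : Type} (R : W → W → Prop) (V : W → α → Prop)
    (w : W) (A : PForm α) : Prop :=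
  ∀ w', R w w' → PForm.sat V w' A

/-- The worlds of the CL-preferential model constructed from a loop-cumulative
model: pairs `(s, w)` with `w ∈ l(s)`. -/
def Wc {α : Type} (M : LCModel α) : Type := {p : M.S × M.W // p.2 ∈ M.l p.1}

/-- The accessibility relation of the constructed model: pairs sharing the
same state. -/
def Rc {α : Type} (M : LCModel α) : Wc M → Wc M → Prop := fun p q => p.1.1 = q.1.1

/-- The valuation of the constructed model. -/
def Vc {α : Type} (M : LCModel α) : Wc M → α → Prop := fun p => M.V p.1.2


lemma sat_Vc {α : Type} (M : LCModel α) (A : PForm α) (p : Wc M) :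
    PForm.sat (Vc M) p A ↔ PForm.sat M.V p.1.2 A := by
  induction A with
  | atom a => rfl
  | neg A ih => exact not_congr ih
  | conj A B ihA ihB => exact and_congr ihA ihB
  | disj A B ihA ihB => exact or_congr ihA ihB

/-- for every propositional `A`, `M, s ⊫ A` iff `LA` holds at
`(s, w)` in the constructed model, for every `w ∈ l(s)`. -/
theorem stateSat_iff_Lsat {α : Type} (M : LCModel α) (A : PForm α)
    (s : M.S) (w : M.W) (hw : w ∈ M.l s) :
    stateSat M.l M.V s A ↔ Lsat (Rc M) (Vc M) ⟨(s, w), hw⟩ A := by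
  constructor
  · intro h q hq
    rw [sat_Vc]
    exact h q.1.2 (by have e : s = q.1.1 := hq; exact e ▸ q.2)
  · intro h w' hw'
    have := h ⟨(s, w'), hw'⟩ rfl
    exact (sat_Vc M A ⟨(s, w'), hw'⟩).mp this
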